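/- arXiv:1706.00075 — 2 statements merged into one kernel-verified Lean document; each statement's English description precedes it below -/
import Mathlib

section
/- Let ε ∈ ℤ/p²ℤ and let R denote the quotient ring (ℤ/p²ℤ)[X]/(X² − ε), with its canonical ℤ/p²ℤ-algebra map ℤ/p²ℤ → R. If g₁ and g₂ are elements of GL₂(ℤ/p²ℤ) whose images in GL₂(R) under the induced map (applying the algebra map to each entry) are conjugate in GL₂(R), then g₁ and g₂ are conjugate in GL₂(ℤ/p²ℤ). -/
open Matrix

/-- `GL₂(ℤ/nℤ)`. -/
abbrev GL2 (n : ℕ) : Type := GL (Fin 2) (ZMod n)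

/-- Reduction modulo `p` from `ℤ/p²ℤ` to `ℤ/pℤ`. -/
def red (p : ℕ) : ZMod (p^2) →+* ZMod p :=
  ZMod.castHom (dvd_pow_self p (by norm_num)) (ZMod p)

/-- The natural homomorphism `φ : GL₂(ℤ/p²ℤ) →* GL₂(ℤ/pℤ)` given by entrywise
reduction modulo `p`. -/
def phi (p : ℕ) : GL2 (p^2) →* GL2 p :=
  Matrix.GeneralLinearGroup.map (red p)

/-- The element `1 + p • A` of `GL₂(ℤ/p²ℤ)` (its inverse is `1 - p • A`). -/
def kerUnit {p : ℕ} (A : Matrix (Fin 2) (Fin 2) (ZMod (p^2))) : GL2 (p^2) where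
  val := 1 + (p : ZMod (p^2)) • A
  inv := 1 - (p : ZMod (p^2)) • A
  val_inv := by
    have h : ((p : ZMod (p^2)) • A) * ((p : ZMod (p^2)) • A) = 0 := by
      rw [smul_mul_assoc, mul_smul_comm, smul_smul, ← Nat.cast_mul, ← pow_two,
        ZMod.natCast_self, zero_smul]
    rw [add_mul, one_mul, mul_sub, mul_one, h, sub_zero]
    abel
  inv_val := by
    have h : ((p : ZMod (p^2)) • A) * ((p : ZMod (p^2)) • A) = 0 := by
      rw [smul_mul_assoc, mul_smul_comm, smul_smul, ← Nat.cast_mul, ← pow_two,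
        ZMod.natCast_self, zero_smul]
    rw [sub_mul, one_mul, mul_add, mul_one, h, add_zero]
    abel

/-- The antidiagonal swap matrix `!![0,1;1,0]` as an element of `GL₂(ℤ/p²ℤ)`. -/
def swapGL (p : ℕ) : GL2 (p^2) where
  val := !![0, 1; 1, 0]
  inv := !![0, 1; 1, 0]
  val_inv := by
    ext i j
    fin_cases i <;> fin_cases j <;>
      simp [Matrix.mul_apply, Fin.sum_univ_succ, Matrix.one_apply]
  inv_val := by
    ext i j
    fin_cases i <;> fin_cases j <;>
      simp [Matrix.mul_apply, Fin.sum_univ_succ, Matrix.one_apply]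

/-- Subgroups `H₁` and `H₂` of a group `G` are locally conjugate in `G` if there is a
bijection `f : H₁ → H₂` such that `h` and `f h` are conjugate in `G` for every `h ∈ H₁`. -/
def IsLocallyConjugate {G : Type*} [Group G] (H₁ H₂ : Subgroup G) : Prop :=
  ∃ f : H₁ ≃ H₂, ∀ h : H₁, IsConj (h : G) ((f h : G))

/-- Subgroups `H₁` and `H₂` of `G` are conjugate in `G`: `g H₁ g⁻¹ = H₂` for some `g`. -/
def IsConjugateSubgroup {G : Type*} [Group G] (H₁ H₂ : Subgroup G) : Prop :=
  ∃ g : G, Subgroup.map (MulAut.conj g).toMonoidHom H₁ = H₂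

/-- Nontrivially locally conjugate: locally conjugate but not conjugate. -/
def IsNontriviallyLocallyConjugate {G : Type*} [Group G] (H₁ H₂ : Subgroup G) : Prop :=
  IsLocallyConjugate H₁ H₂ ∧ ¬ IsConjugateSubgroup H₁ H₂

section Aux
open Polynomial AdjoinRoot

open Polynomial AdjoinRoot

variable {S : Type*} [CommRing S] [Nontrivial S]

/-- coordinate maps on `AdjoinRoot (X^2 - C ε)` -/
noncomputable def qco (ε : S) (i : ℕ) : AdjoinRoot (X ^ 2 - C ε) →ₗ[S] S :=
  (Polynomial.lcoeff S i).comp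
    (AdjoinRoot.modByMonicHom (monic_X_pow_sub_C ε two_ne_zero))

lemma qco_mk (ε : S) (i : ℕ) (q : S[X]) :
    qco ε i (mk _ q) = (q %ₘ (X ^ 2 - C ε)).coeff i := by
  simp [qco, AdjoinRoot.modByMonicHom_mk]

lemma degf (ε : S) : (X ^ 2 - C ε : S[X]).degree = 2 :=
  degree_X_pow_sub_C (by norm_num) ε

lemma qco_of (ε : S) (i : ℕ) (s : S) :
    qco ε i (AdjoinRoot.of _ s) = (C s).coeff i := by
  have : AdjoinRoot.of (X ^ 2 - C ε) s = mk _ (C s) := rfl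
  rw [this, qco_mk]
  congr 1
  rw [modByMonic_eq_self_iff (monic_X_pow_sub_C ε two_ne_zero), degf]
  exact lt_of_le_of_lt (degree_C_le) (by norm_num)

lemma qco_zero_of (ε : S) (s : S) : qco ε 0 (AdjoinRoot.of _ s) = s := by simp [qco_of]
lemma qco_one_of (ε : S) (s : S) : qco ε 1 (AdjoinRoot.of _ s) = 0 := by simp [qco_of]

lemma qco_of_mul (ε : S) (i : ℕ) (s : S) (r : AdjoinRoot (X ^ 2 - C ε)) :
    qco ε i (AdjoinRoot.of _ s * r) = s * qco ε i r := by
  rw [← AdjoinRoot.algebraMap_eq, ← Algebra.smul_def, _root_.map_smul, smul_eq_mul]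

lemma qco_mul_of (ε : S) (i : ℕ) (s : S) (r : AdjoinRoot (X ^ 2 - C ε)) :
    qco ε i (r * AdjoinRoot.of _ s) = qco ε i r * s := by
  rw [mul_comm, qco_of_mul, mul_comm]

lemma qrec (ε : S) (r : AdjoinRoot (X ^ 2 - C ε)) :
    r = AdjoinRoot.of _ (qco ε 0 r) + AdjoinRoot.of _ (qco ε 1 r) * root _ := by
  obtain ⟨q', rfl⟩ := AdjoinRoot.mk_surjective r
  set q := q' %ₘ (X ^ 2 - C ε) with hq
  have hdeg : q.degree < 2 := by
    rw [← degf ε]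
    exact degree_modByMonic_lt q' (monic_X_pow_sub_C ε two_ne_zero)
  have : q = C (q.coeff 1) * X + C (q.coeff 0) :=
    eq_X_add_C_of_degree_le_one (by exact_mod_cast Order.le_of_lt_succ (by exact_mod_cast hdeg))
  rw [qco_mk, qco_mk, ← hq]
  have hmk : AdjoinRoot.mk (X ^ 2 - C ε) q = AdjoinRoot.mk _ q' := by
    rw [hq, ← AdjoinRoot.modByMonicHom_mk (monic_X_pow_sub_C ε two_ne_zero) q']
    exact AdjoinRoot.mk_leftInverse (monic_X_pow_sub_C ε two_ne_zero) _
  conv_lhs => rw [← hmk, this]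
  rw [_root_.map_add, _root_.map_mul, AdjoinRoot.mk_X, AdjoinRoot.mk_C, AdjoinRoot.mk_C]
  ring

lemma qroot_sq (ε : S) : (root (X ^ 2 - C ε)) ^ 2 = AdjoinRoot.of _ ε := by
  have := AdjoinRoot.eval₂_root (X ^ 2 - C ε)
  simpa [sub_eq_zero] using this

section ZModLemmas

def red' (p : ℕ) : ZMod (p^2) →+* ZMod p :=
  ZMod.castHom (dvd_pow_self p (by norm_num)) (ZMod p)

lemma isUnit_of_red_ne_zero {p : ℕ} [Fact p.Prime] {u : ZMod (p^2)}
    (h : red' p u ≠ 0) : IsUnit u := by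
  have hp : p.Prime := Fact.out
  have : u = ((u.val : ℕ) : ZMod (p^2)) := (ZMod.natCast_zmod_val u).symm
  rw [this]
  rw [ZMod.isUnit_iff_coprime]
  apply Nat.Coprime.pow_right
  rw [Nat.coprime_comm, hp.coprime_iff_not_dvd]
  intro hdvd
  apply h
  rw [this, _root_.map_natCast, ZMod.natCast_eq_zero_iff]
  exact hdvd

lemma exists_eq_p_mul {p : ℕ} [Fact p.Prime] {u : ZMod (p^2)}
    (h : red' p u = 0) : ∃ a : ZMod (p^2), u = ((p : ℕ) : ZMod (p^2)) * a := by
  have : u = ((u.val : ℕ) : ZMod (p^2)) := (ZMod.natCast_zmod_val u).symm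
  rw [this, _root_.map_natCast, ZMod.natCast_eq_zero_iff] at h
  obtain ⟨k, hk⟩ := h
  refine ⟨(k : ZMod (p^2)), ?_⟩
  calc u = ((u.val : ℕ) : ZMod (p^2)) := this
  _ = (((p * k : ℕ)) : ZMod (p^2)) := by rw [hk]
  _ = ((p : ℕ) : ZMod (p^2)) * k := by push_cast; ring

lemma not_isUnit_p {p : ℕ} [Fact p.Prime] : ¬ IsUnit ((p : ℕ) : ZMod (p^2)) := by
  intro h
  have := h.map (red' p)
  rw [_root_.map_natCast, ZMod.natCast_self] at this
  exact not_isUnit_zero this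

end ZModLemmas

lemma qco_matrix_right {S : Type*} [CommRing S] [Nontrivial S] (ε : S) (n : ℕ)
    (M : Matrix (Fin 2) (Fin 2) (AdjoinRoot (X ^ 2 - C ε)))
    (g : Matrix (Fin 2) (Fin 2) S) (i j : Fin 2) :
    qco ε n (((M * g.map (AdjoinRoot.of (X ^ 2 - C ε)) : Matrix (Fin 2) (Fin 2) (AdjoinRoot (X ^ 2 - C ε)))) i j) =
      ((Matrix.of fun i j => qco ε n (M i j)) * g) i j := by
  simp [Matrix.mul_apply, _root_.map_sum, qco_mul_of, Matrix.map_apply]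

lemma qco_matrix_left {S : Type*} [CommRing S] [Nontrivial S] (ε : S) (n : ℕ)
    (M : Matrix (Fin 2) (Fin 2) (AdjoinRoot (X ^ 2 - C ε)))
    (g : Matrix (Fin 2) (Fin 2) S) (i j : Fin 2) :
    qco ε n (((g.map (AdjoinRoot.of (X ^ 2 - C ε)) * M : Matrix (Fin 2) (Fin 2) (AdjoinRoot (X ^ 2 - C ε)))) i j) =
      (g * (Matrix.of fun i j => qco ε n (M i j))) i j := by
  simp [Matrix.mul_apply, _root_.map_sum, qco_of_mul, Matrix.map_apply]


end Aux

section Main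
open Polynomial AdjoinRoot

/-- Let `R = (ℤ/p²ℤ)[X]/(X² - ε)`. If two elements of `GL₂(ℤ/p²ℤ)`
become conjugate in `GL₂(R)` (via the entrywise algebra map), then they are already
conjugate in `GL₂(ℤ/p²ℤ)`. -/
theorem isConj_of_isConj_quadExt {p : ℕ} [Fact p.Prime] (hp : Odd p) (ε : ZMod (p^2))
    (g₁ g₂ : GL2 (p^2))
    (h : IsConj
      (Matrix.GeneralLinearGroup.map
        (algebraMap (ZMod (p^2))
          (Polynomial (ZMod (p^2)) ⧸
            Ideal.span {Polynomial.X ^ 2 - Polynomial.C ε})) g₁)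
      (Matrix.GeneralLinearGroup.map
        (algebraMap (ZMod (p^2))
          (Polynomial (ZMod (p^2)) ⧸
            Ideal.span {Polynomial.X ^ 2 - Polynomial.C ε})) g₂)) :
    IsConj g₁ g₂ := by

  have hprime : p.Prime := Fact.out
  haveI : Fact (1 < p ^ 2) := ⟨by nlinarith [hprime.two_le]⟩
  have h' : IsConj
      (Matrix.GeneralLinearGroup.map (AdjoinRoot.of (X ^ 2 - C ε)) g₁)
      (Matrix.GeneralLinearGroup.map (AdjoinRoot.of (X ^ 2 - C ε)) g₂) := h
  obtain ⟨m, hm⟩ := h'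
  set mu : GL (Fin 2) (AdjoinRoot (X ^ 2 - C ε)) := (m : GL (Fin 2) (AdjoinRoot (X ^ 2 - C ε))) with hmudef
  set M : Matrix (Fin 2) (Fin 2) (AdjoinRoot (X ^ 2 - C ε)) := mu.val with hMdef
  have hM : M * ((g₁ : Matrix (Fin 2) (Fin 2) (ZMod (p^2))).map (AdjoinRoot.of (X ^ 2 - C ε))) =
      ((g₂ : Matrix (Fin 2) (Fin 2) (ZMod (p^2))).map (AdjoinRoot.of (X ^ 2 - C ε))) * M := by
    have h2 : mu * (Matrix.GeneralLinearGroup.map (AdjoinRoot.of (X ^ 2 - C ε)) g₁) =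
        (Matrix.GeneralLinearGroup.map (AdjoinRoot.of (X ^ 2 - C ε)) g₂) * mu := hm
    have := congrArg Units.val h2
    simpa [Matrix.GeneralLinearGroup.map, RingHom.mapMatrix_apply] using this
  set A : Matrix (Fin 2) (Fin 2) (ZMod (p^2)) := Matrix.of fun i j => qco ε 0 (M i j) with hAdef
  set B : Matrix (Fin 2) (Fin 2) (ZMod (p^2)) := Matrix.of fun i j => qco ε 1 (M i j) with hBdef
  have hA : A * g₁.val = g₂.val * A := by
    ext i j
    rw [hAdef, ← qco_matrix_right, ← qco_matrix_left, hM]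
  have hB : B * g₁.val = g₂.val * B := by
    ext i j
    rw [hBdef, ← qco_matrix_right, ← qco_matrix_left, hM]
  set cr : ZMod (p^2) :=
    A 0 0 * B 1 1 + B 0 0 * A 1 1 - A 0 1 * B 1 0 - B 0 1 * A 1 0 with hcrdef
  have hroot : (root (X ^ 2 - C ε)) ^ 2 = AdjoinRoot.of _ ε := qroot_sq ε
  have hrec : ∀ i j, M i j = AdjoinRoot.of _ (A i j) + AdjoinRoot.of _ (B i j) * root _ := fun i j => qrec ε (M i j)
  have hdet : M.det = AdjoinRoot.of _ (A.det + ε * B.det) + AdjoinRoot.of _ cr * root _ := by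
    rw [Matrix.det_fin_two, hrec 0 0, hrec 0 1, hrec 1 0, hrec 1 1, hcrdef,
      Matrix.det_fin_two A, Matrix.det_fin_two B]
    simp only [_root_.map_add, _root_.map_mul, _root_.map_sub]
    linear_combination (AdjoinRoot.of (X ^ 2 - C ε) (B 0 0) * AdjoinRoot.of (X ^ 2 - C ε) (B 1 1)
      - AdjoinRoot.of (X ^ 2 - C ε) (B 0 1) * AdjoinRoot.of (X ^ 2 - C ε) (B 1 0)) * hroot
  have hMunit : IsUnit M.det := by
    apply IsUnit.of_mul_eq_one (Matrix.det mu.inv)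
    rw [← Matrix.det_mul, hMdef, mu.val_inv, Matrix.det_one]
  set q : Polynomial (ZMod p) :=
    C (red' p B.det) * X ^ 2 + C (red' p cr) * X + C (red' p A.det) with hqdef
  have hqne : q ≠ 0 := by
    intro h0
    have hb : red' p B.det = 0 := by
      have := congrArg (fun f => Polynomial.coeff f 2) h0
      simpa [hqdef, Polynomial.coeff_C] using this
    have hv : red' p cr = 0 := by
      have := congrArg (fun f => Polynomial.coeff f 1) h0
      simpa [hqdef, Polynomial.coeff_C] using this
    have ha : red' p A.det = 0 := by
      have := congrArg (fun f => Polynomial.coeff f 0) h0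
      simpa [hqdef, Polynomial.coeff_C] using this
    obtain ⟨a, ha'⟩ := exists_eq_p_mul ha
    obtain ⟨b, hb'⟩ := exists_eq_p_mul hb
    obtain ⟨v, hv'⟩ := exists_eq_p_mul hv
    have hfac : M.det = AdjoinRoot.of _ (((p : ℕ) : ZMod (p^2))) *
        (AdjoinRoot.of _ (a + ε * b) + AdjoinRoot.of _ v * root _) := by
      rw [hdet, ha', hb', hv']
      simp only [_root_.map_add, _root_.map_mul]
      ring
    have hup : IsUnit (AdjoinRoot.of (X ^ 2 - C ε) (((p : ℕ) : ZMod (p^2)))) := by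
      rw [hfac] at hMunit
      exact isUnit_of_mul_isUnit_left hMunit
    obtain ⟨u, hu⟩ := hup
    apply not_isUnit_p (p := p)
    apply IsUnit.of_mul_eq_one (qco ε 0 ((u⁻¹ : _) : AdjoinRoot (X ^ 2 - C ε)))
    have h1 : AdjoinRoot.of (X ^ 2 - C ε) (((p : ℕ) : ZMod (p^2))) * ((u⁻¹ : _) : AdjoinRoot (X ^ 2 - C ε)) = 1 := by
      rw [← hu]; exact u.mul_inv
    have := congrArg (qco ε 0) h1
    rwa [qco_of_mul, show (1 : AdjoinRoot (X ^ 2 - C ε)) = AdjoinRoot.of _ 1 from (_root_.map_one _).symm,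
      qco_zero_of] at this
  have hcard : (q.natDegree : Cardinal) < Cardinal.mk (ZMod p) := by
    have h2p : 2 < p := by
      have h2le := hprime.two_le
      have hne : p ≠ 2 := by
        rintro rfl
        norm_num [Nat.odd_iff] at hp
      omega
    have hd : q.natDegree ≤ 2 := Polynomial.natDegree_quadratic_le
    have : Cardinal.mk (ZMod p) = p := by
      rw [Cardinal.mk_fintype, ZMod.card]
    rw [this]
    exact_mod_cast lt_of_le_of_lt hd h2p
  obtain ⟨t₀, ht₀⟩ := q.exists_eval_ne_zero_of_natDegree_lt_card hqne hcard
  set t : ZMod (p^2) := ((t₀.val : ℕ) : ZMod (p^2)) with htdef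
  have hred_t : red' p t = t₀ := by
    rw [htdef, _root_.map_natCast]
    exact ZMod.natCast_zmod_val t₀
  set Cm : Matrix (Fin 2) (Fin 2) (ZMod (p^2)) := A + t • B with hCmdef
  have hCg : Cm * g₁.val = g₂.val * Cm := by
    rw [hCmdef, Matrix.add_mul, Matrix.mul_add, hA, Matrix.smul_mul, hB, Matrix.mul_smul]
  have hdetC : Cm.det = A.det + cr * t + B.det * t ^ 2 := by
    rw [hCmdef, Matrix.det_fin_two, Matrix.det_fin_two A, Matrix.det_fin_two B, hcrdef]
    simp only [Matrix.add_apply, Matrix.smul_apply, smul_eq_mul]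
    ring
  have hredC : red' p Cm.det ≠ 0 := by
    have : red' p Cm.det = q.eval t₀ := by
      rw [hdetC, hqdef]
      simp only [_root_.map_add, _root_.map_mul, _root_.map_pow, hred_t, Polynomial.eval_add,
        Polynomial.eval_mul, Polynomial.eval_pow, Polynomial.eval_C, Polynomial.eval_X]
      ring
    rw [this]
    exact ht₀
  have hCunit : IsUnit Cm := (Matrix.isUnit_iff_isUnit_det Cm).mpr
    (isUnit_of_red_ne_zero hredC)
  obtain ⟨u, hu⟩ := hCunit
  refine ⟨toUnits (u : GL (Fin 2) (ZMod (p^2))), ?_⟩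
  have hval : u.val * g₁.val = g₂.val * u.val := by rw [hu]; exact hCg
  show (u : GL (Fin 2) (ZMod (p^2))) * g₁ = g₂ * u
  exact Units.ext (by simpa using hval)

end Main
end

section
/- Let p be a prime with p > 3 and let H be a subgroup of GL₂(ℤ/p²ℤ). If φ(H) contains every element of GL₂(ℤ/pℤ) of determinant 1, then H contains every element g ∈ GL₂(ℤ/p²ℤ) satisfying φ(g) = 1 and det(g) = 1; that is, ker φ ∩ SL₂(ℤ/p²ℤ) ⊆ H. -/
open Matrix

open Finset

section
variable {p : ℕ} [Fact p.Prime]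
set_option linter.unusedSectionVars false

lemma pp0 : (p : ZMod (p^2)) * (p : ZMod (p^2)) = 0 := by
  rw [← Nat.cast_mul, ← pow_two, ZMod.natCast_self]

lemma red_zero {x : ZMod (p^2)} (h : red p x = 0) :
    ∃ y : ZMod (p^2), x = (p : ZMod (p^2)) * y := by
  haveI : NeZero (p^2) := ⟨pow_ne_zero 2 (Fact.out (p := p.Prime)).ne_zero⟩
  have hx : ((x.val : ℕ) : ZMod (p^2)) = x := ZMod.natCast_rightInverse x
  have h2 : ((x.val : ℕ) : ZMod p) = 0 := by
    rw [← map_natCast (red p) x.val, hx]; exact h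
  rw [ZMod.natCast_eq_zero_iff] at h2
  obtain ⟨k, hk⟩ := h2
  exact ⟨(k : ZMod (p^2)), by rw [← hx, hk, Nat.cast_mul]⟩

lemma red_congr {x y : ZMod (p^2)} (h : red p x = red p y) :
    (p : ZMod (p^2)) * x = (p : ZMod (p^2)) * y := by
  obtain ⟨z, hz⟩ := red_zero (x := x - y) (by rw [map_sub, h, sub_self])
  have : x = y + (p : ZMod (p^2)) * z := by linear_combination hz
  rw [this, mul_add, ← mul_assoc, pp0, zero_mul, add_zero]

lemma phi_val (g : GL2 (p^2)) :
    ((phi p g : GL2 p) : Matrix (Fin 2) (Fin 2) (ZMod p))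
      = ((g : Matrix (Fin 2) (Fin 2) (ZMod (p^2)))).map (red p) := rfl
end

section
variable {p : ℕ}
set_option linter.unusedSectionVars false
lemma pp0' : (p : ZMod (p^2)) * (p : ZMod (p^2)) = 0 := by
  rw [← Nat.cast_mul, ← pow_two, ZMod.natCast_self]

lemma psmul_mul_psmul (A B : Matrix (Fin 2) (Fin 2) (ZMod (p^2))) :
    ((p : ZMod (p^2)) • A) * ((p : ZMod (p^2)) • B) = 0 := by
  rw [smul_mul_assoc, mul_smul_comm, smul_smul, pp0', zero_smul]

lemma kerUnit_val (A : Matrix (Fin 2) (Fin 2) (ZMod (p^2))) :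
    (kerUnit A : Matrix (Fin 2) (Fin 2) (ZMod (p^2))) = 1 + (p : ZMod (p^2)) • A := rfl

lemma kerUnit_mul (A B : Matrix (Fin 2) (Fin 2) (ZMod (p^2))) :
    kerUnit A * kerUnit B = kerUnit (A + B) := by
  apply Units.ext
  show (1 + (p : ZMod (p^2)) • A) * (1 + (p : ZMod (p^2)) • B) = 1 + (p : ZMod (p^2)) • (A + B)
  rw [add_mul, one_mul, mul_add, mul_one, psmul_mul_psmul, smul_add]
  abel

lemma kerUnit_zero : (kerUnit (0 : Matrix (Fin 2) (Fin 2) (ZMod (p^2)))) = 1 := by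
  apply Units.ext
  show 1 + (p : ZMod (p^2)) • (0 : Matrix (Fin 2) (Fin 2) (ZMod (p^2))) = 1
  rw [smul_zero, add_zero]

lemma kerUnit_inv (A : Matrix (Fin 2) (Fin 2) (ZMod (p^2))) :
    (kerUnit A)⁻¹ = kerUnit (-A) := by
  have h0 : A + -A = 0 := by abel
  rw [inv_eq_iff_mul_eq_one, kerUnit_mul, h0, kerUnit_zero]

lemma kerUnit_congr {A B : Matrix (Fin 2) (Fin 2) (ZMod (p^2))}
    (h : (p : ZMod (p^2)) • A = (p : ZMod (p^2)) • B) : kerUnit A = kerUnit B := by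
  apply Units.ext
  show 1 + (p : ZMod (p^2)) • A = 1 + (p : ZMod (p^2)) • B
  rw [h]

lemma kerUnit_nsmul (A : Matrix (Fin 2) (Fin 2) (ZMod (p^2))) (k : ℕ) :
    kerUnit (k • A) = kerUnit A ^ k := by
  induction k with
  | zero => simpa using kerUnit_zero
  | succ k ih =>
    rw [succ_nsmul, ← kerUnit_mul, ih]
    exact (pow_succ _ _).symm

lemma kerUnit_conj (h : GL2 (p^2)) (A : Matrix (Fin 2) (Fin 2) (ZMod (p^2))) :
    h * kerUnit A * h⁻¹ =
      kerUnit ((h : Matrix (Fin 2) (Fin 2) (ZMod (p^2))) * A *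
        (↑h⁻¹ : Matrix (Fin 2) (Fin 2) (ZMod (p^2)))) := by
  apply Units.ext
  show (h : Matrix (Fin 2) (Fin 2) (ZMod (p^2))) * (1 + (p : ZMod (p^2)) • A) * (↑h⁻¹ : Matrix (Fin 2) (Fin 2) (ZMod (p^2)))
      = 1 + (p : ZMod (p^2)) • ((h : Matrix (Fin 2) (Fin 2) (ZMod (p^2))) * A * (↑h⁻¹ : Matrix (Fin 2) (Fin 2) (ZMod (p^2))))
  have hh : (h : Matrix (Fin 2) (Fin 2) (ZMod (p^2))) * (↑h⁻¹ : Matrix (Fin 2) (Fin 2) (ZMod (p^2))) = 1 := h.mul_inv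
  rw [mul_add, mul_one, add_mul, hh, mul_smul_comm, smul_mul_assoc]
end

-- nat sum lemmas
lemma six_mul_sum_sq (n : ℕ) : 6 * ∑ i ∈ range (n+1), i*i = n*(n+1)*(2*n+1) := by
  induction n with
  | zero => simp
  | succ n ih =>
    rw [Finset.sum_range_succ, Nat.mul_add, ih]
    ring

lemma p_dvd_sum_id {p : ℕ} (hp : p.Prime) (hp3 : 3 < p) : p ∣ ∑ i ∈ range p, i := by
  have h2 : (∑ i ∈ range p, i) * 2 = p * (p-1) := Finset.sum_range_id_mul_two p
  have : p ∣ (∑ i ∈ range p, i) * 2 := h2 ▸ Dvd.intro _ rfl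
  rcases (Nat.Prime.dvd_mul hp).1 this with h | h
  · exact h
  · exact absurd (Nat.le_of_dvd (by norm_num) h) (by omega)

lemma p_dvd_sum_sq {p : ℕ} (hp : p.Prime) (hp3 : 3 < p) : p ∣ ∑ i ∈ range p, i*i := by
  obtain ⟨m, rfl⟩ : ∃ m, p = m + 1 := ⟨p - 1, by omega⟩
  have h6 := six_mul_sum_sq m
  have hdvd : (m+1) ∣ 6 * ∑ i ∈ range (m+1), i*i := by
    rw [h6]; exact ⟨m * (2*m+1), by ring⟩
  have h23 : ¬ (m+1) ∣ 6 := fun h => by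
    rcases (Nat.Prime.dvd_mul hp).1 (show (m+1) ∣ 2*3 from h) with h' | h' <;>
      exact absurd (Nat.le_of_dvd (by norm_num) h') (by omega)
  rcases (Nat.Prime.dvd_mul hp).1 hdvd with h | h
  · exact absurd h h23
  · exact h
open Matrix Finset

section
variable {p : ℕ}
set_option linter.unusedSectionVars false

local notation "R" => ZMod (p^2)
local notation "M2" => Matrix (Fin 2) (Fin 2) (ZMod (p^2))

lemma pp0'' : (p : ZMod (p^2)) * (p : ZMod (p^2)) = 0 := by
  rw [← Nat.cast_mul, ← pow_two, ZMod.natCast_self]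

lemma psmul_mul_psmul' (A B : M2) :
    ((p : R) • A) * ((p : R) • B) = 0 := by
  rw [smul_mul_assoc, mul_smul_comm, smul_smul, pp0'', zero_smul]

def nMat (p : ℕ) : Matrix (Fin 2) (Fin 2) (ZMod (p^2)) := !![0,1;0,0]
def uMat (p : ℕ) : Matrix (Fin 2) (Fin 2) (ZMod (p^2)) := 1 + nMat p
def vMat (p : ℕ) : Matrix (Fin 2) (Fin 2) (ZMod (p^2)) := 1 - nMat p

lemma n_mul_n : nMat p * nMat p = 0 := by
  ext i j
  fin_cases i <;> fin_cases j <;> simp [nMat, Matrix.mul_apply, Fin.sum_univ_succ]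

lemma u_mul_v : uMat p * vMat p = 1 := by
  ext i j
  fin_cases i <;> fin_cases j <;>
    simp [uMat, vMat, nMat, Matrix.mul_apply, Fin.sum_univ_succ, Matrix.one_apply]

lemma v_mul_u : vMat p * uMat p = 1 := by
  ext i j
  fin_cases i <;> fin_cases j <;>
    simp [uMat, vMat, nMat, Matrix.mul_apply, Fin.sum_univ_succ, Matrix.one_apply]

lemma u_pow (k : ℕ) : (uMat p)^k = 1 + (k : R) • nMat p := by
  induction k with
  | zero => simp
  | succ k ih =>
    rw [pow_succ (uMat p) k, ih, uMat, mul_add, add_mul, add_mul, one_mul, mul_one,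
      smul_mul_assoc, n_mul_n, smul_zero]
    simp only [one_mul]
    push_cast
    rw [add_smul, one_smul]
    abel

lemma v_pow (k : ℕ) : (vMat p)^k = 1 - (k : R) • nMat p := by
  induction k with
  | zero => simp
  | succ k ih =>
    rw [pow_succ (vMat p) k, ih, vMat, mul_sub, sub_mul, sub_mul, one_mul, mul_one,
      smul_mul_assoc, n_mul_n, smul_zero]
    simp only [one_mul]
    push_cast
    rw [add_smul, one_smul]
    abel

lemma one_padd_mul (X Y : M2) :
    (1 + (p:R) • X) * (1 + (p:R) • Y) = 1 + (p:R) • (X + Y) := by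
  rw [add_mul, one_mul, mul_add, mul_one, psmul_mul_psmul', smul_add]
  abel

lemma pow_formula (C : M2) (k : ℕ) :
    (uMat p * (1 + (p:R) • C))^k
      = (uMat p)^k * (1 + (p:R) • ∑ i ∈ range k, (vMat p)^i * C * (uMat p)^i) := by
  induction k with
  | zero => simp
  | succ k ih =>
    rw [pow_succ (uMat p * (1 + (p:R) • C)) k, ih]
    have step : (1 + (p:R) • ∑ i ∈ range k, (vMat p)^i * C * (uMat p)^i) *
        (uMat p * (1 + (p:R) • C))
        = uMat p * (1 + (p:R) • ∑ i ∈ range (k+1), (vMat p)^i * C * (uMat p)^i) := by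
      have h1 : (1 + (p:R) • ∑ i ∈ range k, (vMat p)^i * C * (uMat p)^i) * uMat p
          = uMat p * (1 + (p:R) • ∑ i ∈ range k, (vMat p)^(i+1) * C * (uMat p)^(i+1)) := by
        rw [mul_add, mul_one, add_mul, one_mul, mul_smul_comm, smul_mul_assoc, Finset.mul_sum,
          Finset.sum_mul]
        congr 2
        refine Finset.sum_congr rfl fun i _ => ?_
        rw [pow_succ' (vMat p) i, pow_succ (uMat p) i]
        have h2 : uMat p * (vMat p * vMat p ^ i * C * (uMat p ^ i * uMat p))
            = vMat p ^ i * C * uMat p ^ i * uMat p := by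
          calc uMat p * (vMat p * vMat p ^ i * C * (uMat p ^ i * uMat p))
              = (uMat p * vMat p) * (vMat p ^ i * C * uMat p ^ i * uMat p) := by
                simp only [mul_assoc]
            _ = _ := by rw [u_mul_v, one_mul]
        exact h2.symm
      calc (1 + (p:R) • ∑ i ∈ range k, (vMat p)^i * C * (uMat p)^i) *
            (uMat p * (1 + (p:R) • C))
          = ((1 + (p:R) • ∑ i ∈ range k, (vMat p)^i * C * (uMat p)^i) * uMat p) *
            (1 + (p:R) • C) := by rw [mul_assoc]
        _ = uMat p * ((1 + (p:R) • ∑ i ∈ range k, (vMat p)^(i+1) * C * (uMat p)^(i+1)) *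
            (1 + (p:R) • C)) := by rw [h1, mul_assoc]
        _ = uMat p * (1 + (p:R) • ∑ i ∈ range (k+1), (vMat p)^i * C * (uMat p)^i) := by
            rw [one_padd_mul]
            congr 2
            rw [Finset.sum_range_succ']
            simp
    rw [mul_assoc, step, ← mul_assoc]
    rw [← pow_succ (uMat p) k]

end

section
variable {p : ℕ}
set_option linter.unusedSectionVars false
local notation "R" => ZMod (p^2)
local notation "M2" => Matrix (Fin 2) (Fin 2) (ZMod (p^2))

lemma expand_conj (C : M2) (i : ℕ) :
    (vMat p)^i * C * (uMat p)^i
      = C + (i:R) • (C * nMat p) - (i:R) • (nMat p * C)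
          - ((i:R) * (i:R)) • (nMat p * C * nMat p) := by
  rw [u_pow, v_pow]
  simp only [sub_mul, mul_add, add_mul, mul_sub, one_mul, mul_one, smul_mul_assoc,
    mul_smul_comm, smul_sub, smul_add, smul_smul]
  abel

lemma key0 {m : ℕ} (hm : p ∣ m) (X : M2) : (p:R) • (((m:ℕ):R) • X) = 0 := by
  obtain ⟨k, rfl⟩ := hm
  rw [smul_smul, ← Nat.cast_mul]
  have : ((p * (p * k) : ℕ) : R) = 0 := by
    rw [ZMod.natCast_eq_zero_iff]
    exact ⟨k, by ring⟩
  rw [this, zero_smul]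

lemma psmul_sum_zero (hp : p.Prime) (hp3 : 3 < p) (C : M2) :
    (p:R) • ∑ i ∈ range p, (vMat p)^i * C * (uMat p)^i = 0 := by
  have hsum : ∑ i ∈ range p, (vMat p)^i * C * (uMat p)^i
      = ((p:ℕ):R) • C + ((∑ i ∈ range p, i : ℕ):R) • (C * nMat p)
        - ((∑ i ∈ range p, i : ℕ):R) • (nMat p * C)
        - ((∑ i ∈ range p, i*i : ℕ):R) • (nMat p * C * nMat p) := by
    rw [Finset.sum_congr rfl (fun i _ => expand_conj C i)]
    rw [Finset.sum_sub_distrib, Finset.sum_sub_distrib, Finset.sum_add_distrib,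
      ← Finset.sum_smul, ← Finset.sum_smul, ← Finset.sum_smul, Finset.sum_const,
      Finset.card_range]
    push_cast
    rw [Nat.cast_smul_eq_nsmul]
  rw [hsum]
  rw [smul_sub, smul_sub, smul_add]
  rw [key0 dvd_rfl, key0 (p_dvd_sum_id hp hp3), key0 (p_dvd_sum_id hp hp3),
    key0 (p_dvd_sum_sq hp hp3)]
  simp

end

section
variable {p : ℕ} [Fact p.Prime]
set_option linter.unusedSectionVars false
local notation "R" => ZMod (p^2)
local notation "M2" => Matrix (Fin 2) (Fin 2) (ZMod (p^2))

lemma umap : (uMat p).map (red p) = !![1,1;0,1] := by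
  ext i j
  fin_cases i <;> fin_cases j <;>
    simp [uMat, nMat, Matrix.map_apply, Matrix.one_apply]

lemma pth_power (hp3 : 3 < p) (h : GL2 (p^2))
    (hred : ((h : M2)).map (red p) = !![1,1;0,1]) :
    h ^ p = kerUnit (nMat p) := by
  have hB : ∀ i j, ∃ y, (h : M2) i j = uMat p i j + (p:R) * y := by
    intro i j
    have : red p ((h : M2) i j - uMat p i j) = 0 := by
      have h1 : red p ((h : M2) i j) = !![(1:ZMod p),1;0,1] i j := by
        rw [← hred]; rfl
      have h2 : red p (uMat p i j) = !![(1:ZMod p),1;0,1] i j := by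
        rw [← umap (p := p)]; rfl
      rw [map_sub, h1, h2, sub_self]
    obtain ⟨y, hy⟩ := red_zero this
    exact ⟨y, by linear_combination hy⟩
  choose B hB using hB
  have hM : (h : M2) = uMat p * (1 + (p:R) • (vMat p * Matrix.of B)) := by
    rw [mul_add, mul_one, mul_smul_comm, ← mul_assoc, u_mul_v, one_mul]
    ext i j
    rw [hB i j]
    simp [Matrix.smul_apply, smul_eq_mul]
  apply Units.ext
  have hval : ((h ^ p : GL2 (p^2)) : M2) = ((h : M2))^p := Units.val_pow_eq_pow_val h p
  rw [hval, hM, pow_formula, psmul_sum_zero (Fact.out) hp3, add_zero, mul_one,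
    u_pow]
  rfl
end

section main
variable {p : ℕ} [Fact p.Prime]
set_option linter.unusedSectionVars false
local notation "R" => ZMod (p^2)
local notation "M2" => Matrix (Fin 2) (Fin 2) (ZMod (p^2))
local notation "M2p" => Matrix (Fin 2) (Fin 2) (ZMod p)

def glUnit (p : ℕ) (A B : Matrix (Fin 2) (Fin 2) (ZMod p)) (h1 : A * B = 1)
    (h2 : B * A = 1) : GL2 p := ⟨A, B, h1, h2⟩

lemma psmul_congr {X Y : M2} (hxy : X.map (red p) = Y.map (red p)) :
    (p:R) • X = (p:R) • Y := by
  ext i j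
  have := congrFun (congrFun hxy i) j
  simp only [Matrix.map_apply] at this
  simpa [Matrix.smul_apply, smul_eq_mul] using red_congr this

lemma red_of_phi {h : GL2 (p^2)} {s : GL2 p} (hphi : phi p h = s) :
    ((h : M2)).map (red p) = (s : M2p) := by
  rw [← phi_val, hphi]

lemma red_of_phi_inv {h : GL2 (p^2)} {s : GL2 p} (hphi : phi p h = s) :
    ((↑(h⁻¹) : M2)).map (red p) = (↑(s⁻¹) : M2p) := by
  rw [← phi_val, map_inv, hphi]

lemma conj_mem (H : Subgroup (GL2 (p^2)))
    (hSL : ∀ M : GL2 p, (↑M : M2p).det = 1 → M ∈ H.map (phi p))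
    (s : GL2 p) (hs : (↑s : M2p).det = 1)
    {A A' : M2} (hA : kerUnit A ∈ H)
    (hmap : (↑s : M2p) * A.map (red p) * (↑s⁻¹ : M2p) = A'.map (red p)) :
    kerUnit A' ∈ H := by
  obtain ⟨h, hH, hphi⟩ := hSL s hs
  have hmem : h * kerUnit A * h⁻¹ ∈ H := mul_mem (mul_mem hH hA) (inv_mem hH)
  rw [kerUnit_conj] at hmem
  have heq : kerUnit ((h : M2) * A * (↑h⁻¹ : M2)) = kerUnit A' := by
    apply kerUnit_congr
    apply psmul_congr
    rw [Matrix.map_mul, Matrix.map_mul, red_of_phi hphi, red_of_phi_inv hphi, hmap]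
  rwa [heq] at hmem

lemma smul_mem_ker (H : Subgroup (GL2 (p^2))) (a : R) (X : M2)
    (hX : kerUnit X ∈ H) : kerUnit (a • X) ∈ H := by
  haveI : NeZero (p^2) := ⟨pow_ne_zero 2 (Fact.out (p := p.Prime)).ne_zero⟩
  have ha : a • X = a.val • X := by
    rw [← Nat.cast_smul_eq_nsmul R, ZMod.natCast_rightInverse a]
  rw [ha, kerUnit_nsmul]
  exact pow_mem hX a.val

set_option maxHeartbeats 1600000 in
theorem T_le_of_SL_le_image' {p : ℕ} [Fact p.Prime] (hp3 : 3 < p)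
    (H : Subgroup (GL2 (p^2)))
    (hSL : ∀ M : GL2 p,
      (↑M : Matrix (Fin 2) (Fin 2) (ZMod p)).det = 1 → M ∈ H.map (phi p)) :
    ∀ g : GL2 (p^2), phi p g = 1 →
      (↑g : Matrix (Fin 2) (Fin 2) (ZMod (p^2))).det = 1 → g ∈ H := by
  intro g hg hdet
  -- step 1: kerUnit E12 ∈ H
  set u1 : GL2 p := glUnit p !![1,1;0,1] !![1,-1;0,1]
    (by ext i j; fin_cases i <;> fin_cases j <;>
      simp [glUnit, Matrix.mul_apply, Fin.sum_univ_succ, Matrix.one_apply])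
    (by ext i j; fin_cases i <;> fin_cases j <;>
      simp [glUnit, Matrix.mul_apply, Fin.sum_univ_succ, Matrix.one_apply]) with hu1
  obtain ⟨h, hH, hphi⟩ := hSL u1 (by
    show (!![1,1;0,1] : Matrix (Fin 2) (Fin 2) (ZMod p)).det = 1
    simp [Matrix.det_fin_two_of])
  have hred1 : ((h : Matrix (Fin 2) (Fin 2) (ZMod (p^2)))).map (red p) = !![1,1;0,1] :=
    red_of_phi hphi
  have hE12 : kerUnit !![0,1;0,0] ∈ H := by
    have := pth_power hp3 h hred1
    rw [show (nMat p) = !![0,1;0,0] from rfl] at this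
    rw [← this]
    exact pow_mem hH p
  -- concrete reduction maps
  have hmapE12 : ((!![0,1;0,0] : Matrix (Fin 2) (Fin 2) (ZMod (p^2)))).map (red p)
      = !![0,1;0,0] := by
    ext i j; fin_cases i <;> fin_cases j <;> simp [Matrix.map_apply]
  have hmapE21n : ((!![0,0;-1,0] : Matrix (Fin 2) (Fin 2) (ZMod (p^2)))).map (red p)
      = !![0,0;-1,0] := by
    ext i j; fin_cases i <;> fin_cases j <;> simp [Matrix.map_apply]
  have hmapW : ((!![-1,1;-1,1] : Matrix (Fin 2) (Fin 2) (ZMod (p^2)))).map (red p)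
      = !![-1,1;-1,1] := by
    ext i j; fin_cases i <;> fin_cases j <;> simp [Matrix.map_apply]
  -- step 2: kerUnit E21 ∈ H via conjugation by s1 = [[0,-1],[1,0]]
  set s1 : GL2 p := glUnit p !![0,-1;1,0] !![0,1;-1,0]
    (by ext i j; fin_cases i <;> fin_cases j <;>
      simp [glUnit, Matrix.mul_apply, Fin.sum_univ_succ, Matrix.one_apply])
    (by ext i j; fin_cases i <;> fin_cases j <;>
      simp [glUnit, Matrix.mul_apply, Fin.sum_univ_succ, Matrix.one_apply]) with hs1
  have hE21n : kerUnit !![0,0;-1,0] ∈ H := by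
    refine conj_mem H hSL s1 (by
      show (!![0,-1;1,0] : Matrix (Fin 2) (Fin 2) (ZMod p)).det = 1
      simp [Matrix.det_fin_two_of]) hE12 ?_
    rw [hmapE12, hmapE21n]
    show (!![0,-1;1,0] : Matrix (Fin 2) (Fin 2) (ZMod p)) * !![0,1;0,0] * !![0,1;-1,0]
      = !![0,0;-1,0]
    ext i j; fin_cases i <;> fin_cases j <;>
      simp [Matrix.mul_apply, Fin.sum_univ_succ]
  have hE21 : kerUnit !![0,0;1,0] ∈ H := by
    have hneg : -(!![0,0;-1,0] : Matrix (Fin 2) (Fin 2) (ZMod (p^2))) = !![0,0;1,0] := by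
      ext i j; fin_cases i <;> fin_cases j <;> simp
    have := inv_mem hE21n
    rwa [kerUnit_inv, hneg] at this
  -- step 3: kerUnit diag(-1,1) ∈ H via conjugation by s2 = [[1,0],[1,1]]
  set s2 : GL2 p := glUnit p !![1,0;1,1] !![1,0;-1,1]
    (by ext i j; fin_cases i <;> fin_cases j <;>
      simp [glUnit, Matrix.mul_apply, Fin.sum_univ_succ, Matrix.one_apply])
    (by ext i j; fin_cases i <;> fin_cases j <;>
      simp [glUnit, Matrix.mul_apply, Fin.sum_univ_succ, Matrix.one_apply]) with hs2
  have hW : kerUnit !![-1,1;-1,1] ∈ H := by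
    refine conj_mem H hSL s2 (by
      show (!![1,0;1,1] : Matrix (Fin 2) (Fin 2) (ZMod p)).det = 1
      simp [Matrix.det_fin_two_of]) hE12 ?_
    rw [hmapE12, hmapW]
    show (!![1,0;1,1] : Matrix (Fin 2) (Fin 2) (ZMod p)) * !![0,1;0,0] * !![1,0;-1,1]
      = !![-1,1;-1,1]
    ext i j; fin_cases i <;> fin_cases j <;>
      simp [Matrix.mul_apply, Fin.sum_univ_succ]
  have hD : kerUnit !![-1,0;0,1] ∈ H := by
    have h1 : kerUnit (!![-1,1;-1,1] : Matrix (Fin 2) (Fin 2) (ZMod (p^2)))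
        * kerUnit (-!![0,1;0,0]) * kerUnit (-!![0,0;-1,0]) = kerUnit !![-1,0;0,1] := by
      rw [kerUnit_mul, kerUnit_mul]
      congr 1
      ext i j; fin_cases i <;> fin_cases j <;> simp
    rw [← h1]
    exact mul_mem (mul_mem hW (by rw [← kerUnit_inv]; exact inv_mem hE12))
      (by rw [← kerUnit_inv]; exact inv_mem hE21n)
  -- step 4: decompose g = 1 + p • A
  have hgred : ((g : Matrix (Fin 2) (Fin 2) (ZMod (p^2)))).map (red p)
      = (1 : Matrix (Fin 2) (Fin 2) (ZMod p)) := red_of_phi hg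
  have hA : ∀ i j, ∃ y, (g : Matrix (Fin 2) (Fin 2) (ZMod (p^2))) i j
      = (1 : Matrix (Fin 2) (Fin 2) (ZMod (p^2))) i j + (p : ZMod (p^2)) * y := by
    intro i j
    have hz : red p ((g : Matrix (Fin 2) (Fin 2) (ZMod (p^2))) i j
        - (1 : Matrix (Fin 2) (Fin 2) (ZMod (p^2))) i j) = 0 := by
      have h1 : red p ((g : Matrix (Fin 2) (Fin 2) (ZMod (p^2))) i j)
          = (1 : Matrix (Fin 2) (Fin 2) (ZMod p)) i j := by
        rw [← hgred]; rfl
      have h2 : red p ((1 : Matrix (Fin 2) (Fin 2) (ZMod (p^2))) i j)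
          = (1 : Matrix (Fin 2) (Fin 2) (ZMod p)) i j := by
        fin_cases i <;> fin_cases j <;> simp [Matrix.one_apply]
      rw [map_sub, h1, h2, sub_self]
    obtain ⟨y, hy⟩ := red_zero hz
    exact ⟨y, by linear_combination hy⟩
  choose A hA using hA
  have g_eq : (g : Matrix (Fin 2) (Fin 2) (ZMod (p^2)))
      = 1 + (p : ZMod (p^2)) • Matrix.of A := by
    ext i j; rw [hA i j]; simp [Matrix.smul_apply, smul_eq_mul]
  -- trace condition from det = 1
  have htr : (p : ZMod (p^2)) * (A 1 1) = (p : ZMod (p^2)) * (-(A 0 0)) := by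
    have hd : ((1 : Matrix (Fin 2) (Fin 2) (ZMod (p^2)))
        + (p : ZMod (p^2)) • Matrix.of A).det = 1 := by rw [← g_eq]; exact hdet
    have e00 : ((1 : Matrix (Fin 2) (Fin 2) (ZMod (p^2)))
        + (p : ZMod (p^2)) • Matrix.of A) 0 0 = 1 + (p : ZMod (p^2)) * A 0 0 := by
      simp [Matrix.one_apply]
    have e11 : ((1 : Matrix (Fin 2) (Fin 2) (ZMod (p^2)))
        + (p : ZMod (p^2)) • Matrix.of A) 1 1 = 1 + (p : ZMod (p^2)) * A 1 1 := by
      simp [Matrix.one_apply]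
    have e01 : ((1 : Matrix (Fin 2) (Fin 2) (ZMod (p^2)))
        + (p : ZMod (p^2)) • Matrix.of A) 0 1 = (p : ZMod (p^2)) * A 0 1 := by
      simp [Matrix.one_apply]
    have e10 : ((1 : Matrix (Fin 2) (Fin 2) (ZMod (p^2)))
        + (p : ZMod (p^2)) • Matrix.of A) 1 0 = (p : ZMod (p^2)) * A 1 0 := by
      simp [Matrix.one_apply]
    rw [Matrix.det_fin_two, e00, e11, e01, e10] at hd
    linear_combination hd + (A 0 1 * A 1 0 - A 0 0 * A 1 1) * pp0''
  -- the trace-zero replacement matrix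
  set A' : Matrix (Fin 2) (Fin 2) (ZMod (p^2)) :=
    (-(A 0 0)) • !![-1,0;0,1] + (A 0 1) • !![0,1;0,0] + (A 1 0) • !![0,0;1,0] with hA'
  have hsm : (p : ZMod (p^2)) • Matrix.of A = (p : ZMod (p^2)) • A' := by
    ext i j
    fin_cases i <;> fin_cases j <;>
      simp [hA', Matrix.smul_apply, Matrix.add_apply, smul_eq_mul]
    linear_combination htr
  have gker : g = kerUnit A' := by
    apply Units.ext
    show (g : Matrix (Fin 2) (Fin 2) (ZMod (p^2))) = 1 + (p : ZMod (p^2)) • A'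
    rw [g_eq, hsm]
  rw [gker, hA', ← kerUnit_mul, ← kerUnit_mul]
  exact mul_mem (mul_mem (smul_mem_ker H _ _ hD) (smul_mem_ker H _ _ hE12))
    (smul_mem_ker H _ _ hE21)

end main


/-- Let `p > 3` be prime and `H ≤ GL₂(ℤ/p²ℤ)`. If `φ(H)` contains
every element of `GL₂(ℤ/pℤ)` of determinant `1`, then `H` contains every
`g ∈ GL₂(ℤ/p²ℤ)` with `φ(g) = 1` and `det g = 1`, i.e. `ker φ ∩ SL₂(ℤ/p²ℤ) ⊆ H`. -/
theorem T_le_of_SL_le_image {p : ℕ} [Fact p.Prime] (hp3 : 3 < p)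
    (H : Subgroup (GL2 (p^2)))
    (hSL : ∀ M : GL2 p,
      (↑M : Matrix (Fin 2) (Fin 2) (ZMod p)).det = 1 → M ∈ H.map (phi p)) :
    ∀ g : GL2 (p^2), phi p g = 1 →
      (↑g : Matrix (Fin 2) (Fin 2) (ZMod (p^2))).det = 1 → g ∈ H :=
  T_le_of_SL_le_image' hp3 H hSL
end
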